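/- Suppose that ‖P_{T_i} ∘ 𝒜_i* ∘ 𝒜_j ∘ P_{T_j}‖ ≤ 1/(10s) for all i ≠ j and ‖P_{T_i} ∘ 𝒜_i* ∘ 𝒜_i ∘ P_{T_i} − P_{T_i}‖ ≤ 1/(10s) for all i (operator norms of linear maps on ℂ^{K×N} equipped with the Frobenius norm). Then for every block-diagonal matrix Z = blkdiag(Z_1,…,Z_s) ∈ ℂ^{Ks×Ns}: | ‖𝒜(P_T(Z))‖² − ‖P_T(Z)‖_F² | ≤ (1/10)‖Z‖_F², where P_T(Z) = blkdiag(P_{T_1}(Z_1),…,P_{T_s}(Z_s)). -/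

import Mathlib

noncomputable section
open Finset ComplexConjugate

namespace RGD

/-- Squared Euclidean norm of a complex vector. -/
def vnormSq {n : ℕ} (v : Fin n → ℂ) : ℝ := ∑ j, ‖v j‖ ^ 2

/-- Euclidean norm of a complex vector. -/
def vnorm {n : ℕ} (v : Fin n → ℂ) : ℝ := Real.sqrt (vnormSq v)

/-- Inner product, conjugate-linear in the first argument. -/
def vinner {n : ℕ} (u v : Fin n → ℂ) : ℂ := ∑ j, conj (u j) * v j

/-- Squared Frobenius norm of a matrix. -/
def frobSq {K N : ℕ} (Z : Matrix (Fin K) (Fin N) ℂ) : ℝ := ∑ k, ∑ j, ‖Z k j‖ ^ 2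

/-- Frobenius norm of a matrix. -/
def frob {K N : ℕ} (Z : Matrix (Fin K) (Fin N) ℂ) : ℝ := Real.sqrt (frobSq Z)

/-- Frobenius inner product `⟨U,V⟩ = Tr(U*V)`, conjugate-linear in the first argument. -/
def finner {K N : ℕ} (U V : Matrix (Fin K) (Fin N) ℂ) : ℂ := ∑ k, ∑ j, conj (U k j) * V k j

/-- Spectral (operator) norm of a matrix: sup of `‖Zv‖` over the closed unit ball. -/
def opNorm {K N : ℕ} (Z : Matrix (Fin K) (Fin N) ℂ) : ℝ :=
  sSup {r : ℝ | ∃ v : Fin N → ℂ, vnorm v ≤ 1 ∧ r = vnorm (Z.mulVec v)}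

/-- Squared Frobenius norm of a block-diagonal matrix, given by its diagonal blocks. -/
def famFrobSq {K N s : ℕ} (Z : Fin s → Matrix (Fin K) (Fin N) ℂ) : ℝ := ∑ i, frobSq (Z i)

/-- Frobenius norm of a block-diagonal matrix, given by its diagonal blocks. -/
def famFrob {K N s : ℕ} (Z : Fin s → Matrix (Fin K) (Fin N) ℂ) : ℝ := Real.sqrt (famFrobSq Z)

/-- The rank-one matrix `u v*`. -/
def rankOne {K N : ℕ} (u : Fin K → ℂ) (v : Fin N → ℂ) : Matrix (Fin K) (Fin N) ℂ :=
  Matrix.of fun k j => u k * conj (v j)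

/-- `ℋ(h,x)`: block-diagonal matrix with `i`-th block `hᵢ xᵢ*`. -/
def Hmap {K N s : ℕ} (h : Fin s → Fin K → ℂ) (x : Fin s → Fin N → ℂ) :
    Fin s → Matrix (Fin K) (Fin N) ℂ := fun i => rankOne (h i) (x i)

/-- `𝒜ᵢ(Z) = (bₗ* Z aₗ)ₗ`. -/
def calAi {K N L : ℕ} (b : Fin L → Fin K → ℂ) (a : Fin L → Fin N → ℂ)
    (Z : Matrix (Fin K) (Fin N) ℂ) : Fin L → ℂ :=
  fun l => vinner (b l) (Z.mulVec (a l))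

/-- `𝒜(Z) = Σᵢ 𝒜ᵢ(Zᵢ)` on block-diagonal matrices. -/
def calA {K N L s : ℕ} (b : Fin L → Fin K → ℂ) (a : Fin s → Fin L → Fin N → ℂ)
    (Z : Fin s → Matrix (Fin K) (Fin N) ℂ) : Fin L → ℂ :=
  fun l => ∑ i, calAi b (a i) (Z i) l

/-- `𝒜ᵢ*(z) = Σₗ zₗ bₗ aₗ*`. -/
def calAdj {K N L : ℕ} (b : Fin L → Fin K → ℂ) (a : Fin L → Fin N → ℂ)
    (z : Fin L → ℂ) : Matrix (Fin K) (Fin N) ℂ :=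
  Matrix.of fun k j => ∑ l, z l * b l k * conj (a l j)

/-- `‖𝒜*(e)‖ = maxᵢ ‖𝒜ᵢ*(e)‖` (operator norms). -/
def AadjNorm {K N L s : ℕ} (b : Fin L → Fin K → ℂ) (a : Fin s → Fin L → Fin N → ℂ)
    (e : Fin L → ℂ) : ℝ :=
  ⨆ i : Fin s, opNorm (calAdj b (a i) e)

/-- `B*B = I_K`, expressed in terms of the columns `bₗ` of `B*`. -/
def BtBeqI {K L : ℕ} (b : Fin L → Fin K → ℂ) : Prop :=
  ∀ k k' : Fin K, (∑ l, b l k * conj (b l k')) = if k = k' then (1 : ℂ) else 0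

/-- `μ ≥ μ_h`, i.e. `√L ‖B h_{i0}‖_∞ ≤ μ ‖h_{i0}‖` for all `i`. -/
def muhLe {K L s : ℕ} (b : Fin L → Fin K → ℂ) (h0 : Fin s → Fin K → ℂ) (μ : ℝ) : Prop :=
  ∀ i l, Real.sqrt L * ‖vinner (b l) (h0 i)‖ ≤ μ * vnorm (h0 i)

/-- `d₀ = √(Σᵢ d_{i0}²)`. -/
def dtot {s : ℕ} (d0 : Fin s → ℝ) : ℝ := Real.sqrt (∑ i, d0 i ^ 2)

/-- Condition number `κ = (maxᵢ d_{i0}) / (minᵢ d_{i0})`. -/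
def kappa {s : ℕ} (d0 : Fin s → ℝ) : ℝ := (⨆ i, d0 i) / (⨅ i, d0 i)

/-- The observation `y = 𝒜(ℋ(h₀,x₀)) + e`. -/
def yvec {K N L s : ℕ} (b : Fin L → Fin K → ℂ) (a : Fin s → Fin L → Fin N → ℂ)
    (h0 : Fin s → Fin K → ℂ) (x0 : Fin s → Fin N → ℂ) (e : Fin L → ℂ) : Fin L → ℂ :=
  fun l => calA b a (Hmap h0 x0) l + e l

/-- `F(h,x) = ‖𝒜(ℋ(h,x)) − y‖²`. -/
def Fobj {K N L s : ℕ} (b : Fin L → Fin K → ℂ) (a : Fin s → Fin L → Fin N → ℂ)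
    (h0 : Fin s → Fin K → ℂ) (x0 : Fin s → Fin N → ℂ) (e : Fin L → ℂ)
    (h : Fin s → Fin K → ℂ) (x : Fin s → Fin N → ℂ) : ℝ :=
  vnormSq (fun l => calA b a (Hmap h x) l - yvec b a h0 x0 e l)

def G0 (z : ℝ) : ℝ := max (z - 1) 0 ^ 2

def G0' (z : ℝ) : ℝ := 2 * max (z - 1) 0

/-- The `i`-th regularizer `Gᵢ(hᵢ,xᵢ)` (including the factor `ρ`). -/
def Gi {K N L : ℕ} (b : Fin L → Fin K → ℂ) (ρ μ di : ℝ)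
    (hi : Fin K → ℂ) (xi : Fin N → ℂ) : ℝ :=
  ρ * (G0 (vnormSq hi / (2 * di)) + G0 (vnormSq xi / (2 * di))
    + ∑ l, G0 ((L : ℝ) * ‖vinner (b l) hi‖ ^ 2 / (8 * di * μ ^ 2)))

/-- The regularizer `G(h,x) = Σᵢ Gᵢ(hᵢ,xᵢ)`. -/
def Greg {K N L s : ℕ} (b : Fin L → Fin K → ℂ) (ρ μ : ℝ) (dd : Fin s → ℝ)
    (h : Fin s → Fin K → ℂ) (x : Fin s → Fin N → ℂ) : ℝ :=
  ∑ i, Gi b ρ μ (dd i) (h i) (x i)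

/-- `F̃ = F + G`. -/
def Ftil {K N L s : ℕ} (b : Fin L → Fin K → ℂ) (a : Fin s → Fin L → Fin N → ℂ)
    (h0 : Fin s → Fin K → ℂ) (x0 : Fin s → Fin N → ℂ) (e : Fin L → ℂ)
    (ρ μ : ℝ) (dd : Fin s → ℝ)
    (h : Fin s → Fin K → ℂ) (x : Fin s → Fin N → ℂ) : ℝ :=
  Fobj b a h0 x0 e h x + Greg b ρ μ dd h x

/-- The residual `𝒜(ℋ(h,x)) − y`. -/
def residual {K N L s : ℕ} (b : Fin L → Fin K → ℂ) (a : Fin s → Fin L → Fin N → ℂ)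
    (h0 : Fin s → Fin K → ℂ) (x0 : Fin s → Fin N → ℂ) (e : Fin L → ℂ)
    (h : Fin s → Fin K → ℂ) (x : Fin s → Fin N → ℂ) : Fin L → ℂ :=
  fun l => calA b a (Hmap h x) l - yvec b a h0 x0 e l

/-- Wirtinger gradient `∇F_{hᵢ} = 𝒜ᵢ*(𝒜(ℋ(h,x)) − y) xᵢ`. -/
def gradFh {K N L s : ℕ} (b : Fin L → Fin K → ℂ) (a : Fin s → Fin L → Fin N → ℂ)
    (h0 : Fin s → Fin K → ℂ) (x0 : Fin s → Fin N → ℂ) (e : Fin L → ℂ)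
    (h : Fin s → Fin K → ℂ) (x : Fin s → Fin N → ℂ) (i : Fin s) : Fin K → ℂ :=
  (calAdj b (a i) (residual b a h0 x0 e h x)).mulVec (x i)

/-- Wirtinger gradient `∇F_{xᵢ} = (𝒜ᵢ*(𝒜(ℋ(h,x)) − y))* hᵢ`. -/
def gradFx {K N L s : ℕ} (b : Fin L → Fin K → ℂ) (a : Fin s → Fin L → Fin N → ℂ)
    (h0 : Fin s → Fin K → ℂ) (x0 : Fin s → Fin N → ℂ) (e : Fin L → ℂ)
    (h : Fin s → Fin K → ℂ) (x : Fin s → Fin N → ℂ) (i : Fin s) : Fin N → ℂ :=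
  (calAdj b (a i) (residual b a h0 x0 e h x)).conjTranspose.mulVec (h i)

/-- Wirtinger gradient `∇G_{hᵢ}`. -/
def gradGh {K L s : ℕ} (b : Fin L → Fin K → ℂ) (ρ μ : ℝ) (dd : Fin s → ℝ)
    (h : Fin s → Fin K → ℂ) (i : Fin s) : Fin K → ℂ :=
  fun k => ((ρ / (2 * dd i) : ℝ) : ℂ) *
    (((G0' (vnormSq (h i) / (2 * dd i)) : ℝ) : ℂ) * h i k
      + (((L : ℝ) / (4 * μ ^ 2) : ℝ) : ℂ) *
        ∑ l, ((G0' ((L : ℝ) * ‖vinner (b l) (h i)‖ ^ 2 / (8 * dd i * μ ^ 2)) : ℝ) : ℂ)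
          * (vinner (b l) (h i) * b l k))

/-- Wirtinger gradient `∇G_{xᵢ}`. -/
def gradGx {N s : ℕ} (ρ : ℝ) (dd : Fin s → ℝ)
    (x : Fin s → Fin N → ℂ) (i : Fin s) : Fin N → ℂ :=
  fun j => ((ρ / (2 * dd i) : ℝ) : ℂ) * (((G0' (vnormSq (x i) / (2 * dd i)) : ℝ) : ℂ) * x i j)

/-- `∇F̃_{hᵢ} = ∇F_{hᵢ} + ∇G_{hᵢ}`. -/
def gradH {K N L s : ℕ} (b : Fin L → Fin K → ℂ) (a : Fin s → Fin L → Fin N → ℂ)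
    (h0 : Fin s → Fin K → ℂ) (x0 : Fin s → Fin N → ℂ) (e : Fin L → ℂ)
    (ρ μ : ℝ) (dd : Fin s → ℝ)
    (h : Fin s → Fin K → ℂ) (x : Fin s → Fin N → ℂ) (i : Fin s) : Fin K → ℂ :=
  fun k => gradFh b a h0 x0 e h x i k + gradGh b ρ μ dd h i k

/-- `∇F̃_{xᵢ} = ∇F_{xᵢ} + ∇G_{xᵢ}`. -/
def gradX {K N L s : ℕ} (b : Fin L → Fin K → ℂ) (a : Fin s → Fin L → Fin N → ℂ)
    (h0 : Fin s → Fin K → ℂ) (x0 : Fin s → Fin N → ℂ) (e : Fin L → ℂ)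
    (ρ μ : ℝ) (dd : Fin s → ℝ)
    (h : Fin s → Fin K → ℂ) (x : Fin s → Fin N → ℂ) (i : Fin s) : Fin N → ℂ :=
  fun j => gradFx b a h0 x0 e h x i j + gradGx ρ dd x i j

/-- `‖∇F̃(h,x)‖²` (squared norm of the stacked Wirtinger gradient). -/
def gradNormSq {K N L s : ℕ} (b : Fin L → Fin K → ℂ) (a : Fin s → Fin L → Fin N → ℂ)
    (h0 : Fin s → Fin K → ℂ) (x0 : Fin s → Fin N → ℂ) (e : Fin L → ℂ)
    (ρ μ : ℝ) (dd : Fin s → ℝ)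
    (h : Fin s → Fin K → ℂ) (x : Fin s → Fin N → ℂ) : ℝ :=
  ∑ i, vnormSq (gradH b a h0 x0 e ρ μ dd h x i) + ∑ i, vnormSq (gradX b a h0 x0 e ρ μ dd h x i)

/-- `‖∇F̃(h',x') − ∇F̃(h,x)‖²`. -/
def gradDiffNormSq {K N L s : ℕ} (b : Fin L → Fin K → ℂ) (a : Fin s → Fin L → Fin N → ℂ)
    (h0 : Fin s → Fin K → ℂ) (x0 : Fin s → Fin N → ℂ) (e : Fin L → ℂ)
    (ρ μ : ℝ) (dd : Fin s → ℝ)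
    (h : Fin s → Fin K → ℂ) (x : Fin s → Fin N → ℂ)
    (h' : Fin s → Fin K → ℂ) (x' : Fin s → Fin N → ℂ) : ℝ :=
  ∑ i, vnormSq (fun k => gradH b a h0 x0 e ρ μ dd h' x' i k - gradH b a h0 x0 e ρ μ dd h x i k)
  + ∑ i, vnormSq (fun j => gradX b a h0 x0 e ρ μ dd h' x' i j - gradX b a h0 x0 e ρ μ dd h x i j)

/-- Membership in `𝒩_d`. -/
def inNd {K N s : ℕ} (d0 : Fin s → ℝ)
    (h : Fin s → Fin K → ℂ) (x : Fin s → Fin N → ℂ) : Prop :=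
  ∀ i, vnorm (h i) ≤ 2 * Real.sqrt (d0 i) ∧ vnorm (x i) ≤ 2 * Real.sqrt (d0 i)

/-- Membership in `𝒩_μ`. -/
def inNmu {K L s : ℕ} (b : Fin L → Fin K → ℂ) (d0 : Fin s → ℝ) (μ : ℝ)
    (h : Fin s → Fin K → ℂ) : Prop :=
  ∀ i, ∀ l, Real.sqrt L * ‖vinner (b l) (h i)‖ ≤ 4 * Real.sqrt (d0 i) * μ

/-- `δᵢ(hᵢ,xᵢ) = ‖hᵢxᵢ* − h_{i0}x_{i0}*‖_F / d_{i0}`. -/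
def deltaI {K N : ℕ} (h0i : Fin K → ℂ) (x0i : Fin N → ℂ) (d0i : ℝ)
    (hi : Fin K → ℂ) (xi : Fin N → ℂ) : ℝ :=
  frob (rankOne hi xi - rankOne h0i x0i) / d0i

/-- Membership in `𝒩_ε`. -/
def inNeps {K N s : ℕ} (h0 : Fin s → Fin K → ℂ) (x0 : Fin s → Fin N → ℂ)
    (d0 : Fin s → ℝ) (ε : ℝ)
    (h : Fin s → Fin K → ℂ) (x : Fin s → Fin N → ℂ) : Prop :=
  ∀ i, deltaI (h0 i) (x0 i) (d0 i) (h i) (x i) ≤ ε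

/-- The global relative error `δ(h,x) = ‖ℋ(h,x) − X₀‖_F / d₀`. -/
def deltaTot {K N s : ℕ} (h0 : Fin s → Fin K → ℂ) (x0 : Fin s → Fin N → ℂ)
    (d0 : Fin s → ℝ)
    (h : Fin s → Fin K → ℂ) (x : Fin s → Fin N → ℂ) : ℝ :=
  famFrob (fun i => Hmap h x i - Hmap h0 x0 i) / dtot d0

/-- Membership in `𝒩_F̃`. -/
def inNF {K N L s : ℕ} (b : Fin L → Fin K → ℂ) (a : Fin s → Fin L → Fin N → ℂ)
    (h0 : Fin s → Fin K → ℂ) (x0 : Fin s → Fin N → ℂ) (e : Fin L → ℂ)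
    (d0 : Fin s → ℝ) (ρ μ : ℝ) (dd : Fin s → ℝ) (ε : ℝ)
    (h : Fin s → Fin K → ℂ) (x : Fin s → Fin N → ℂ) : Prop :=
  Ftil b a h0 x0 e ρ μ dd h x ≤ ε ^ 2 * dtot d0 ^ 2 / (3 * (s : ℝ) * kappa d0 ^ 2) + vnormSq e

/-- The Local Restricted Isometry Property on `𝒩_d ∩ 𝒩_μ ∩ 𝒩_ε`. -/
def LocalRIP {K N L s : ℕ} (b : Fin L → Fin K → ℂ) (a : Fin s → Fin L → Fin N → ℂ)
    (h0 : Fin s → Fin K → ℂ) (x0 : Fin s → Fin N → ℂ)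
    (d0 : Fin s → ℝ) (μ ε : ℝ) : Prop :=
  ∀ (h : Fin s → Fin K → ℂ) (x : Fin s → Fin N → ℂ),
    inNd d0 h x → inNmu b d0 μ h → inNeps h0 x0 d0 ε h x →
      (2 / 3) * famFrobSq (fun i => Hmap h x i - Hmap h0 x0 i)
          ≤ vnormSq (calA b a fun i => Hmap h x i - Hmap h0 x0 i)
      ∧ vnormSq (calA b a fun i => Hmap h x i - Hmap h0 x0 i)
          ≤ (3 / 2) * famFrobSq (fun i => Hmap h x i - Hmap h0 x0 i)

/-- `α_{i1} = ⟨h_{i0}, hᵢ⟩ / d_{i0}`. -/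
def alpha1 {K s : ℕ} (h0 : Fin s → Fin K → ℂ) (d0 : Fin s → ℝ)
    (h : Fin s → Fin K → ℂ) (i : Fin s) : ℂ :=
  vinner (h0 i) (h i) / ((d0 i : ℝ) : ℂ)

/-- `α_{i2} = ⟨x_{i0}, xᵢ⟩ / d_{i0}`. -/
def alpha2 {N s : ℕ} (x0 : Fin s → Fin N → ℂ) (d0 : Fin s → ℝ)
    (x : Fin s → Fin N → ℂ) (i : Fin s) : ℂ :=
  vinner (x0 i) (x i) / ((d0 i : ℝ) : ℂ)

/-- `δ₀ = δ/10`. -/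
def delta0 {K N s : ℕ} (h0 : Fin s → Fin K → ℂ) (x0 : Fin s → Fin N → ℂ)
    (d0 : Fin s → ℝ) (h : Fin s → Fin K → ℂ) (x : Fin s → Fin N → ℂ) : ℝ :=
  deltaTot h0 x0 d0 h x / 10

/-- `αᵢ = (1−δ₀)α_{i1}` if `‖hᵢ‖ ≥ ‖xᵢ‖`, else `1/((1−δ₀) conj(α_{i2}))`. -/
def alphaC {K N s : ℕ} (h0 : Fin s → Fin K → ℂ) (x0 : Fin s → Fin N → ℂ)
    (d0 : Fin s → ℝ) (h : Fin s → Fin K → ℂ) (x : Fin s → Fin N → ℂ) (i : Fin s) : ℂ :=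
  if vnorm (x i) ≤ vnorm (h i)
  then ((1 - delta0 h0 x0 d0 h x : ℝ) : ℂ) * alpha1 h0 d0 h i
  else 1 / (((1 - delta0 h0 x0 d0 h x : ℝ) : ℂ) * conj (alpha2 x0 d0 x i))

/-- `Δhᵢ = hᵢ − αᵢ h_{i0}`. -/
def dh {K N s : ℕ} (h0 : Fin s → Fin K → ℂ) (x0 : Fin s → Fin N → ℂ)
    (d0 : Fin s → ℝ) (h : Fin s → Fin K → ℂ) (x : Fin s → Fin N → ℂ) (i : Fin s) :
    Fin K → ℂ :=
  fun k => h i k - alphaC h0 x0 d0 h x i * h0 i k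

/-- `Δxᵢ = xᵢ − conj(αᵢ)⁻¹ x_{i0}`. -/
def dx {K N s : ℕ} (h0 : Fin s → Fin K → ℂ) (x0 : Fin s → Fin N → ℂ)
    (d0 : Fin s → ℝ) (h : Fin s → Fin K → ℂ) (x : Fin s → Fin N → ℂ) (i : Fin s) :
    Fin N → ℂ :=
  fun j => x i j - (conj (alphaC h0 x0 d0 h x i))⁻¹ * x0 i j

/-- `σ²_max(h,x) = maxₗ Σᵢ |bₗ*hᵢ|² ‖xᵢ‖²`. -/
def sigmaMaxSq {K N L s : ℕ} (b : Fin L → Fin K → ℂ)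
    (h : Fin s → Fin K → ℂ) (x : Fin s → Fin N → ℂ) : ℝ :=
  ⨆ l : Fin L, ∑ i, ‖vinner (b l) (h i)‖ ^ 2 * vnormSq (x i)

/-- The rank-one bound (Lemma: `𝒜` on block-diagonal matrices with rank-1 blocks). -/
def RankOneBound {K N L s : ℕ} (b : Fin L → Fin K → ℂ)
    (a : Fin s → Fin L → Fin N → ℂ) : Prop :=
  ∀ (h : Fin s → Fin K → ℂ) (x : Fin s → Fin N → ℂ),
    vnormSq (calA b a (Hmap h x)) ≤
      4 / 3 * famFrobSq (Hmap h x)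
      + 2 * Real.sqrt (2 * (s : ℝ) * famFrobSq (Hmap h x) * sigmaMaxSq b h x
          * ((K : ℝ) + N) * Real.log L)
      + 8 * (s : ℝ) * sigmaMaxSq b h x * ((K : ℝ) + N) * Real.log L

/-- The subspace `Tᵢ = {h_{i0} v* + u x_{i0}*}`. -/
def Tspace {K N : ℕ} (h0i : Fin K → ℂ) (x0i : Fin N → ℂ) :
    Set (Matrix (Fin K) (Fin N) ℂ) :=
  {Z | ∃ (u : Fin K → ℂ) (v : Fin N → ℂ), Z = rankOne h0i v + rankOne u x0i}

/-- `P` is the orthogonal projection onto `Tᵢ` w.r.t. the Frobenius inner product. -/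
def IsFrobProj {K N : ℕ} (h0i : Fin K → ℂ) (x0i : Fin N → ℂ)
    (P : Matrix (Fin K) (Fin N) ℂ → Matrix (Fin K) (Fin N) ℂ) : Prop :=
  ∀ Z, P Z ∈ Tspace h0i x0i ∧ ∀ W ∈ Tspace h0i x0i, finner W (Z - P Z) = 0

/-- Operator norm of `𝒜ᵢ` from `(ℂ^{K×N}, ‖·‖_F)` to `(ℂ^L, ‖·‖)`. -/
def calAiOpNorm {K N L : ℕ} (b : Fin L → Fin K → ℂ) (a : Fin L → Fin N → ℂ) : ℝ :=
  sSup {r : ℝ | ∃ Z : Matrix (Fin K) (Fin N) ℂ, frob Z ≤ 1 ∧ r = vnorm (calAi b a Z)}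

/-- Operator norm of `𝒜` from block-diagonal matrices with `‖·‖_F` to `ℂ^L`. -/
def calAOpNorm {K N L s : ℕ} (b : Fin L → Fin K → ℂ)
    (a : Fin s → Fin L → Fin N → ℂ) : ℝ :=
  sSup {r : ℝ | ∃ Z : Fin s → Matrix (Fin K) (Fin N) ℂ, famFrob Z ≤ 1 ∧ r = vnorm (calA b a Z)}

/-- Norm of a stacked vector in `ℂ^{ns}`. -/
def stackNorm {n s : ℕ} (u : Fin s → Fin n → ℂ) : ℝ := Real.sqrt (∑ i, vnormSq (u i))

/-- Norm of a point `z = (h,x) ∈ ℂ^{s(K+N)}`. -/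
def pairNorm {K N s : ℕ} (u : Fin s → Fin K → ℂ) (v : Fin s → Fin N → ℂ) : ℝ :=
  Real.sqrt (∑ i, vnormSq (u i) + ∑ i, vnormSq (v i))

/-- `z + t • w` componentwise, `t` real. -/
def shiftV {n s : ℕ} (u w : Fin s → Fin n → ℂ) (t : ℝ) : Fin s → Fin n → ℂ :=
  fun i k => u i k + (t : ℂ) * w i k

/-- `σ_max(h) = maxₗ √(Σᵢ |bₗ*hᵢ|²)` (unit `xᵢ`'s). -/
def sigmaMaxU {K L s : ℕ} (b : Fin L → Fin K → ℂ) (h : Fin s → Fin K → ℂ) : ℝ :=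
  ⨆ l, Real.sqrt (∑ i, ‖vinner (b l) (h i)‖ ^ 2)

section AuxStatement9

local notation "⟪" x ", " y "⟫" => @inner ℂ _ _ x y

/-- Matrix to Euclidean space. -/
def mE {K N : ℕ} (Z : Matrix (Fin K) (Fin N) ℂ) : EuclideanSpace ℂ (Fin K × Fin N) :=
  (WithLp.equiv 2 _).symm (fun p => Z p.1 p.2)

lemma finner_eq_inner {K N : ℕ} (U V : Matrix (Fin K) (Fin N) ℂ) :
    finner U V = ⟪mE U, mE V⟫ := by
  simp [finner, mE, PiLp.inner_apply, Fintype.sum_prod_type, RCLike.inner_apply]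
  exact Finset.sum_congr rfl fun k _ => Finset.sum_congr rfl fun j _ => mul_comm _ _

lemma frobSq_nonneg {K N : ℕ} (Z : Matrix (Fin K) (Fin N) ℂ) : 0 ≤ frobSq Z := by
  unfold frobSq; positivity

lemma frobSq_eq {K N : ℕ} (Z : Matrix (Fin K) (Fin N) ℂ) : frobSq Z = ‖mE Z‖ ^ 2 := by
  rw [EuclideanSpace.norm_eq, Real.sq_sqrt (by positivity)]
  simp [frobSq, mE, Fintype.sum_prod_type]

lemma frob_eq {K N : ℕ} (Z : Matrix (Fin K) (Fin N) ℂ) : frob Z = ‖mE Z‖ := by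
  rw [frob, frobSq_eq, Real.sqrt_sq (norm_nonneg _)]

lemma frob_nonneg {K N : ℕ} (Z : Matrix (Fin K) (Fin N) ℂ) : 0 ≤ frob Z := by
  rw [frob_eq]; exact norm_nonneg _

lemma frobSq_eq_sq_frob {K N : ℕ} (Z : Matrix (Fin K) (Fin N) ℂ) : frobSq Z = frob Z ^ 2 := by
  rw [frob_eq, frobSq_eq]

lemma norm_finner_le {K N : ℕ} (U V : Matrix (Fin K) (Fin N) ℂ) :
    ‖finner U V‖ ≤ frob U * frob V := by
  rw [finner_eq_inner, frob_eq, frob_eq]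
  exact norm_inner_le_norm _ _

lemma finner_sub_right {K N : ℕ} (U X Y : Matrix (Fin K) (Fin N) ℂ) :
    finner U (X - Y) = finner U X - finner U Y := by
  simp [finner, Matrix.sub_apply, mul_sub, Finset.sum_sub_distrib]

lemma frobSq_eq_re_finner {K N : ℕ} (Z : Matrix (Fin K) (Fin N) ℂ) :
    frobSq Z = (finner Z Z).re := by
  rw [finner_eq_inner, frobSq_eq]
  exact (inner_self_eq_norm_sq (𝕜 := ℂ) (mE Z)).symm

/-- A Frobenius-orthogonal projection is norm-nonexpansive. -/
lemma frob_proj_le {K N : ℕ} (h0i : Fin K → ℂ) (x0i : Fin N → ℂ)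
    (P : Matrix (Fin K) (Fin N) ℂ → Matrix (Fin K) (Fin N) ℂ)
    (hP : IsFrobProj h0i x0i P) (Z : Matrix (Fin K) (Fin N) ℂ) :
    frob (P Z) ≤ frob Z := by
  have horth : finner (P Z) (Z - P Z) = 0 := (hP Z).2 (P Z) (hP Z).1
  rw [finner_eq_inner] at horth
  have hmEsub : mE (Z - P Z) = mE Z - mE (P Z) := rfl
  rw [hmEsub] at horth
  have hdecomp : ‖mE Z‖ ^ 2 = ‖mE (P Z)‖ ^ 2 + ‖mE Z - mE (P Z)‖ ^ 2 := by
    have := norm_add_sq (𝕜 := ℂ) (mE (P Z)) (mE Z - mE (P Z))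
    have hre : RCLike.re ⟪mE (P Z), mE Z - mE (P Z)⟫ = 0 := by rw [horth]; simp
    simp only [add_sub_cancel] at this
    rw [this, hre]; ring
  rw [frob_eq, frob_eq]
  have h1 : ‖mE (P Z)‖ ^ 2 ≤ ‖mE Z‖ ^ 2 := by nlinarith [sq_nonneg ‖mE Z - mE (P Z)‖]
  calc ‖mE (P Z)‖ = Real.sqrt (‖mE (P Z)‖ ^ 2) := (Real.sqrt_sq (norm_nonneg _)).symm
    _ ≤ Real.sqrt (‖mE Z‖ ^ 2) := Real.sqrt_le_sqrt h1
    _ = ‖mE Z‖ := Real.sqrt_sq (norm_nonneg _)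

/-- Adjoint identity: `⟨𝒜ᵢ(W), z⟩ = ⟨W, 𝒜ᵢ*(z)⟩`. -/
lemma vinner_calAi {K N L : ℕ} (b : Fin L → Fin K → ℂ) (a : Fin L → Fin N → ℂ)
    (W : Matrix (Fin K) (Fin N) ℂ) (z : Fin L → ℂ) :
    vinner (calAi b a W) z = finner W (calAdj b a z) := by
  simp only [vinner, calAi, finner, calAdj, Matrix.mulVec, dotProduct,
    Matrix.of_apply, map_sum, map_mul, Complex.conj_conj, Finset.sum_mul, Finset.mul_sum]
  rw [Finset.sum_comm]
  refine Finset.sum_congr rfl fun k _ => ?_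
  rw [Finset.sum_comm]
  refine Finset.sum_congr rfl fun j _ => ?_
  exact Finset.sum_congr rfl fun l _ => by ring

/-- Vector to Euclidean space. -/
def vE {n : ℕ} (v : Fin n → ℂ) : EuclideanSpace ℂ (Fin n) := (WithLp.equiv 2 _).symm v

lemma vinner_eq_inner {n : ℕ} (u v : Fin n → ℂ) : vinner u v = ⟪vE u, vE v⟫ := by
  simp [vinner, vE, PiLp.inner_apply, RCLike.inner_apply]
  exact Finset.sum_congr rfl fun j _ => mul_comm _ _

lemma vnormSq_eq_re_vinner {n : ℕ} (v : Fin n → ℂ) : vnormSq v = (vinner v v).re := by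
  have h : vnormSq v = ‖vE v‖ ^ 2 := by
    rw [EuclideanSpace.norm_eq, Real.sq_sqrt (by positivity)]
    simp [vnormSq, vE]
  rw [h, vinner_eq_inner]
  exact (inner_self_eq_norm_sq (𝕜 := ℂ) (vE v)).symm

lemma vE_sum {n s : ℕ} (c : Fin s → Fin n → ℂ) :
    vE (fun l => ∑ i, c i l) = ∑ i, vE (c i) := by
  ext l
  simp [vE]

lemma vinner_sum_sum {n s : ℕ} (c : Fin s → Fin n → ℂ) :
    vinner (fun l => ∑ i, c i l) (fun l => ∑ j, c j l) = ∑ i, ∑ j, vinner (c i) (c j) := by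
  simp only [vinner_eq_inner, vE_sum]
  rw [sum_inner]
  exact Finset.sum_congr rfl fun i _ => inner_sum _ _ _

end AuxStatement9

/-- restricted isometry of `𝒜` on `T`. -/
theorem statement9
    {K N L s : ℕ} (hK : 0 < K) (hN : 0 < N) (hL : 0 < L) (hs : 0 < s)
    (b : Fin L → Fin K → ℂ)
    (a : Fin s → Fin L → Fin N → ℂ)
    (h0 : Fin s → Fin K → ℂ) (x0 : Fin s → Fin N → ℂ)
    (d0 : Fin s → ℝ) (hd0 : ∀ i, 0 < d0 i)
    (hh0 : ∀ i, vnorm (h0 i) = Real.sqrt (d0 i))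
    (hx0 : ∀ i, vnorm (x0 i) = Real.sqrt (d0 i))
    (P : Fin s → Matrix (Fin K) (Fin N) ℂ → Matrix (Fin K) (Fin N) ℂ)
    (hP : ∀ i, IsFrobProj (h0 i) (x0 i) (P i))
    (hoff : ∀ i j, i ≠ j → ∀ Z : Matrix (Fin K) (Fin N) ℂ,
      frob (P i (calAdj b (a i) (calAi b (a j) (P j Z)))) ≤ 1 / (10 * (s : ℝ)) * frob Z)
    (hdiag : ∀ i, ∀ Z : Matrix (Fin K) (Fin N) ℂ,
      frob (P i (calAdj b (a i) (calAi b (a i) (P i Z))) - P i Z)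
        ≤ 1 / (10 * (s : ℝ)) * frob Z) :
    ∀ Z : Fin s → Matrix (Fin K) (Fin N) ℂ,
      |vnormSq (calA b a fun i => P i (Z i)) - famFrobSq (fun i => P i (Z i))|
        ≤ 1 / 10 * famFrobSq Z := by
  intro Z
  classical
  set W : Fin s → Matrix (Fin K) (Fin N) ℂ := fun i => P i (Z i) with hWdef
  set f : Fin s → ℝ := fun i => frob (Z i) with hfdef
  have hfnn : ∀ i, 0 ≤ f i := fun i => frob_nonneg _
  have hWle : ∀ i, frob (W i) ≤ f i := fun i => frob_proj_le _ _ _ (hP i) (Z i)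
  have hWnn : ∀ i, 0 ≤ frob (W i) := fun i => frob_nonneg _
  -- projection identity: `⟨Wᵢ, X⟩ = ⟨Wᵢ, Pᵢ X⟩`
  have hproj : ∀ i (X : Matrix (Fin K) (Fin N) ℂ), finner (W i) X = finner (W i) (P i X) := by
    intro i X
    have h1 : finner (W i) (X - P i X) = 0 := (hP i X).2 (W i) ((hP i (Z i)).1)
    rw [finner_sub_right] at h1
    linear_combination h1
  -- the interaction terms
  set T : Fin s → Fin s → ℂ := fun i j =>
    finner (W i) (P i (calAdj b (a i) (calAi b (a j) (W j)))) with hTdef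
  -- expand `‖𝒜(W)‖²`
  have hA : vnormSq (calA b a W) = ∑ i, ∑ j, (T i j).re := by
    rw [vnormSq_eq_re_vinner]
    have h1 : vinner (calA b a W) (calA b a W)
        = ∑ i, ∑ j, vinner (calAi b (a i) (W i)) (calAi b (a j) (W j)) :=
      vinner_sum_sum _
    rw [h1, Complex.re_sum]
    refine Finset.sum_congr rfl fun i _ => ?_
    rw [Complex.re_sum]
    refine Finset.sum_congr rfl fun j _ => ?_
    rw [vinner_calAi, hproj i]
  have hF : famFrobSq W = ∑ i, (finner (W i) (W i)).re := by
    unfold famFrobSq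
    exact Finset.sum_congr rfl fun i _ => frobSq_eq_re_finner _
  -- per-term bound
  have hterm : ∀ i j, |(T i j).re - (if j = i then (finner (W i) (W i)).re else 0)|
      ≤ 1 / (10 * (s : ℝ)) * (f i * f j) := by
    intro i j
    by_cases hij : j = i
    · subst hij
      rw [if_pos rfl]
      have heq : (T j j).re - (finner (W j) (W j)).re
          = (finner (W j) (P j (calAdj b (a j) (calAi b (a j) (W j))) - W j)).re := by
        rw [finner_sub_right, Complex.sub_re]
      rw [heq]
      calc |(finner (W j) (P j (calAdj b (a j) (calAi b (a j) (W j))) - W j)).re|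
          ≤ ‖finner (W j) (P j (calAdj b (a j) (calAi b (a j) (W j))) - W j)‖ :=
            Complex.abs_re_le_norm _
        _ ≤ frob (W j) * frob (P j (calAdj b (a j) (calAi b (a j) (W j))) - W j) :=
            norm_finner_le _ _
        _ ≤ f j * (1 / (10 * (s : ℝ)) * frob (Z j)) :=
            mul_le_mul (hWle j) (hdiag j (Z j)) (frob_nonneg _) (hfnn j)
        _ = 1 / (10 * (s : ℝ)) * (f j * f j) := by ring
    · simp only [if_neg hij, sub_zero]
      calc |(T i j).re| ≤ ‖T i j‖ := Complex.abs_re_le_norm _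
        _ ≤ frob (W i) * frob (P i (calAdj b (a i) (calAi b (a j) (W j)))) :=
            norm_finner_le _ _
        _ ≤ f i * (1 / (10 * (s : ℝ)) * frob (Z j)) :=
            mul_le_mul (hWle i) (hoff i j (fun h => hij h.symm) (Z j)) (frob_nonneg _) (hfnn i)
        _ = 1 / (10 * (s : ℝ)) * (f i * f j) := by ring
  -- assemble
  have hdiff : vnormSq (calA b a W) - famFrobSq W
      = ∑ i, ∑ j, ((T i j).re - (if j = i then (finner (W i) (W i)).re else 0)) := by
    symm
    calc ∑ i, ∑ j, ((T i j).re - (if j = i then (finner (W i) (W i)).re else 0))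
        = ∑ i, ((∑ j, (T i j).re) - (finner (W i) (W i)).re) := by
          refine Finset.sum_congr rfl fun i _ => ?_
          rw [Finset.sum_sub_distrib]
          simp
      _ = (∑ i, ∑ j, (T i j).re) - ∑ i, (finner (W i) (W i)).re := Finset.sum_sub_distrib _ _
      _ = vnormSq (calA b a W) - famFrobSq W := by rw [hA, hF]
  have habs : |vnormSq (calA b a W) - famFrobSq W|
      ≤ ∑ i, ∑ j, (1 / (10 * (s : ℝ)) * (f i * f j)) := by
    rw [hdiff]
    calc |∑ i, ∑ j, ((T i j).re - (if j = i then (finner (W i) (W i)).re else 0))|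
        ≤ ∑ i, |∑ j, ((T i j).re - (if j = i then (finner (W i) (W i)).re else 0))| :=
          Finset.abs_sum_le_sum_abs _ _
      _ ≤ ∑ i, ∑ j, |(T i j).re - (if j = i then (finner (W i) (W i)).re else 0)| :=
          Finset.sum_le_sum fun i _ => Finset.abs_sum_le_sum_abs _ _
      _ ≤ ∑ i, ∑ j, (1 / (10 * (s : ℝ)) * (f i * f j)) :=
          Finset.sum_le_sum fun i _ => Finset.sum_le_sum fun j _ => hterm i j
  have hsum : ∑ i, ∑ j, (1 / (10 * (s : ℝ)) * (f i * f j))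
      = 1 / (10 * (s : ℝ)) * (∑ i, f i) ^ 2 := by
    rw [sq, Finset.sum_mul_sum, Finset.mul_sum]
    exact Finset.sum_congr rfl fun i _ => by rw [Finset.mul_sum]
  have hcs : (∑ i, f i) ^ 2 ≤ (s : ℝ) * ∑ i, f i ^ 2 := by
    have := sq_sum_le_card_mul_sum_sq (s := (Finset.univ : Finset (Fin s))) (f := f)
    simpa using this
  have hfam : famFrobSq Z = ∑ i, f i ^ 2 := by
    unfold famFrobSq
    exact Finset.sum_congr rfl fun i _ => frobSq_eq_sq_frob _
  have hspos : (0 : ℝ) < (s : ℝ) := by exact_mod_cast hs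
  calc |vnormSq (calA b a W) - famFrobSq W|
      ≤ 1 / (10 * (s : ℝ)) * (∑ i, f i) ^ 2 := by rw [← hsum]; exact habs
    _ ≤ 1 / (10 * (s : ℝ)) * ((s : ℝ) * ∑ i, f i ^ 2) := by
        apply mul_le_mul_of_nonneg_left hcs
        positivity
    _ = 1 / 10 * famFrobSq Z := by
        rw [hfam]; field_simp

end RGD
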